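/- Let S := {n + 1/n : n ∈ ℕ, n ≥ 1} ∪ ℕ ⊆ ℝ. Then S has uniform asymptotic upper density 2 with respect to its counting measure and Lebesgue measure, D̄(#|_S;|·|) = 2, while the difference set S − S accumulates at 0: every neighborhood of 0 contains a nonzero element of S − S. -/

import Mathlib

open MeasureTheory Set Pointwise Filter ENNReal

/-- The uniform asymptotic upper density of a measure `ν` with respect to `μ`:
`inf` over nonempty compact sets `C` of `sup` over Borel sets `V` with compact
closure of `ν V / μ (C + V)`, where `C + V` is a Minkowski sum. -/
noncomputable def uaud {G : Type*} [AddCommGroup G] [TopologicalSpace G] [MeasurableSpace G]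
    (ν μ : Measure G) : ℝ≥0∞ :=
  ⨅ C ∈ {C : Set G | IsCompact C ∧ C.Nonempty},
    ⨆ V ∈ {V : Set G | MeasurableSet V ∧ IsCompact (closure V)},
      ν V / μ (C + V)

/-- The counting measure of the set `S`: the sum of Dirac measures at the points of `S`,
so that `countOn S V = #(S ∩ V)` for measurable `V`. -/
noncomputable def countOn {G : Type*} [MeasurableSpace G] (S : Set G) : Measure G :=
  Measure.sum (fun s : S => Measure.dirac (s : G))

/-! ### Auxiliary definitions and lemmas -/

def mySet : Set ℝ := {x : ℝ | ∃ n : ℕ, 1 ≤ n ∧ x = (n : ℝ) + 1 / (n : ℝ)} ∪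
  {x : ℝ | ∃ n : ℕ, x = (n : ℝ)}

lemma countOn_apply_finite (S V : Set ℝ) (hV : MeasurableSet V) (h : (S ∩ V).Finite) :
    countOn S V = h.toFinset.card := by
  rw [countOn, Measure.sum_apply _ hV]
  have h1 : ∀ s : S, Measure.dirac (s : ℝ) V = V.indicator 1 (s : ℝ) :=
    fun s => Measure.dirac_apply' _ hV
  simp_rw [h1]
  rw [tsum_subtype S (V.indicator (1 : ℝ → ℝ≥0∞))]
  simp_rw [Set.indicator_indicator]
  rw [tsum_eq_sum (s := h.toFinset) (fun b hb => by
    rw [Set.indicator_of_notMem]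
    simpa using hb)]
  rw [Finset.sum_congr rfl (fun b hb => Set.indicator_of_mem (by simpa using hb) _)]
  simp

lemma mySet_countable : mySet.Countable := by
  apply Set.Countable.union
  · exact (Set.countable_range (fun n : ℕ => (n : ℝ) + 1 / n)).mono
      (fun x hx => by obtain ⟨n, _, hx⟩ := hx; exact ⟨n, hx.symm⟩)
  · exact (Set.countable_range (fun n : ℕ => (n : ℝ))).mono
      (fun x hx => by obtain ⟨n, hx⟩ := hx; exact ⟨n, hx.symm⟩)

lemma mySet_nonneg {x : ℝ} (hx : x ∈ mySet) : 0 ≤ x := by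
  rcases hx with ⟨n, _, rfl⟩ | ⟨n, rfl⟩ <;> positivity

lemma mySet_floor {x : ℝ} (hx : x ∈ mySet) :
    x = (⌊x⌋₊ : ℝ) ∨ x = (⌊x⌋₊ : ℝ) + 1 / (⌊x⌋₊ : ℝ) := by
  rcases hx with ⟨n, hn, rfl⟩ | ⟨n, rfl⟩
  · rcases eq_or_lt_of_le hn with h1 | h2
    · left
      rw [← h1]
      norm_num
    · have hnR : (2 : ℝ) ≤ (n : ℝ) := by exact_mod_cast h2
      have hpos : (0 : ℝ) < n := by linarith
      have hfl : ⌊(n : ℝ) + 1 / (n : ℝ)⌋₊ = n := by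
        rw [Nat.floor_eq_iff (by positivity)]
        have h1 : (0:ℝ) < 1 / n := by positivity
        have h2' : 1 / (n : ℝ) ≤ 1 / 2 := by
          apply one_div_le_one_div_of_le <;> linarith
        constructor <;> [linarith; linarith]
      rw [hfl]
      right; rfl
  · left; rw [Nat.floor_natCast]

lemma mySet_finite_le (M : ℝ) : (mySet ∩ {x | x ≤ M}).Finite := by
  apply Set.Finite.subset (Set.Finite.union
    (((Set.finite_Iic ⌊M⌋₊).image (fun n : ℕ => (n : ℝ))))
    (((Set.finite_Iic ⌊M⌋₊).image (fun n : ℕ => (n : ℝ) + 1 / n))))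
  rintro x ⟨hx, hxM⟩
  have hb : ∀ n : ℕ, (n : ℝ) ≤ x → n ∈ Set.Iic ⌊M⌋₊ := fun n hn =>
    Nat.le_floor (hn.trans hxM)
  rcases hx with ⟨n, _, rfl⟩ | ⟨n, rfl⟩
  · right
    refine ⟨n, hb n ?_, rfl⟩
    have : (0:ℝ) ≤ 1 / n := by positivity
    linarith
  · left
    exact ⟨n, hb n le_rfl, rfl⟩

lemma upper_bound (V : Set ℝ) (hV : MeasurableSet V) (hc : IsCompact (closure V)) :
    countOn mySet V / volume (Set.Icc (0:ℝ) 2 + V) ≤ 2 := by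
  classical
  obtain ⟨M, hM⟩ := (hc.isBounded.subset subset_closure).bddAbove
  have h : (mySet ∩ V).Finite := (mySet_finite_le M).subset
    (fun x ⟨h1, h2⟩ => ⟨h1, hM h2⟩)
  set F := h.toFinset with hF
  have hmemF : ∀ x, x ∈ F ↔ x ∈ mySet ∧ x ∈ V := by
    intro x; rw [hF, Set.Finite.mem_toFinset]; rfl
  set G := F.image (fun x => ⌊x⌋₊) with hG
  have hcard : F.card ≤ 2 * G.card := by
    apply Finset.card_le_mul_card_image
    intro b _
    have hsub : {a ∈ F | ⌊a⌋₊ = b} ⊆ ({(b : ℝ), (b : ℝ) + 1 / b} : Finset ℝ) := by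
      intro a ha
      rw [Finset.mem_filter] at ha
      obtain ⟨haF, hab⟩ := ha
      rcases mySet_floor ((hmemF a).1 haF).1 with h' | h' <;>
        (rw [hab] at h'; rw [h']; simp)
    have h2 : ({(b : ℝ), (b : ℝ) + 1 / b} : Finset ℝ).card ≤ 2 :=
      (Finset.card_insert_le _ _).trans (by simp)
    exact (Finset.card_le_card hsub).trans h2
  have hvol : (G.card : ℝ≥0∞) ≤ volume (Set.Icc (0:ℝ) 2 + V) := by
    have hsub : (⋃ n ∈ G, Set.Ico ((n:ℝ)+1) ((n:ℝ)+2)) ⊆ Set.Icc (0:ℝ) 2 + V := by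
      intro y hy
      rw [Set.mem_iUnion₂] at hy
      obtain ⟨n, hnG, hy⟩ := hy
      rw [hG, Finset.mem_image] at hnG
      obtain ⟨x, hxF, hxn⟩ := hnG
      obtain ⟨hxS, hxV⟩ := (hmemF x).1 hxF
      have hx1 : x < (n:ℝ) + 1 := by
        rw [← hxn]; exact_mod_cast Nat.lt_floor_add_one x
      have hx2 : (n:ℝ) ≤ x := by
        rw [← hxn]; exact Nat.floor_le (mySet_nonneg hxS)
      have hyy : y = (y - x) + x := by ring
      rw [hyy]
      refine Set.add_mem_add ?_ hxV
      rw [Set.mem_Icc]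
      obtain ⟨hA, hB⟩ := hy
      constructor <;> linarith
    have hdisj : (↑G : Set ℕ).PairwiseDisjoint (fun n => Set.Ico ((n:ℝ)+1) ((n:ℝ)+2)) := by
      intro m _ n _ hmn
      simp only [Function.onFun]
      rw [Set.Ico_disjoint_Ico]
      rcases Nat.lt_or_ge m n with h' | h'
      · have : (m:ℝ) + 1 ≤ n := by exact_mod_cast h'
        rw [min_le_iff]; left; rw [le_max_iff]; right; linarith
      · have : (n:ℝ) + 1 ≤ m := by exact_mod_cast lt_of_le_of_ne h' hmn.symm
        rw [min_le_iff]; right; rw [le_max_iff]; left; linarith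
    calc (G.card : ℝ≥0∞) = ∑ n ∈ G, volume (Set.Ico ((n:ℝ)+1) ((n:ℝ)+2)) := by
          simp [Real.volume_Ico]; norm_num
      _ = volume (⋃ n ∈ G, Set.Ico ((n:ℝ)+1) ((n:ℝ)+2)) :=
          (measure_biUnion_finset hdisj (fun n _ => measurableSet_Ico)).symm
      _ ≤ _ := measure_mono hsub
  rw [countOn_apply_finite mySet V hV h]
  apply ENNReal.div_le_of_le_mul
  calc (F.card : ℝ≥0∞) ≤ ((2 * G.card : ℕ) : ℝ≥0∞) := by exact_mod_cast hcard
    _ = 2 * (G.card : ℝ≥0∞) := by push_cast; ring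
    _ ≤ 2 * volume (Set.Icc (0:ℝ) 2 + V) := mul_le_mul_right hvol 2

lemma lower_ratio {a b : ℝ} {C : Set ℝ}
    (hCab : C ⊆ Set.Icc a b) (hab : a ≤ b) (N : ℕ) (hN : 1 ≤ N) :
    ENNReal.ofReal ((2 * N : ℝ) / (N + (b - a + 1))) ≤
      countOn mySet (mySet ∩ Set.Iic ((N : ℝ) + 1/2)) /
        volume (C + (mySet ∩ Set.Iic ((N : ℝ) + 1/2))) := by
  classical
  set V := mySet ∩ Set.Iic ((N : ℝ) + 1/2) with hVdef
  have hVfin : V.Finite := (mySet_finite_le ((N : ℝ) + 1/2)).subset (fun x hx => hx)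
  have hVmeas : MeasurableSet V := (mySet_countable.mono inter_subset_left).measurableSet
  have hfin : (mySet ∩ V).Finite := hVfin.subset inter_subset_right
  have hnum : ((2 * N : ℕ) : ℝ≥0∞) ≤ countOn mySet V := by
    rw [countOn_apply_finite mySet V hVmeas hfin]
    have hmono : ∀ {n m : ℕ}, 2 ≤ n → n < m → (n : ℝ) + 1 / n < (m : ℝ) + 1 / m := by
      intro n m hn hnm
      have h2 : (2:ℝ) ≤ n := by exact_mod_cast hn
      have hm : (n:ℝ) + 1 ≤ m := by exact_mod_cast hnm
      have h1n : 1 / (n:ℝ) < 1 := by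
        rw [div_lt_one (by linarith)]; linarith
      have hm0 : (0:ℝ) < m := by linarith
      have h1m : (0:ℝ) < 1 / m := by positivity
      linarith
    set F : Finset ℝ := ((Finset.range (N+1)).image (fun n : ℕ => (n : ℝ))) ∪
      ((Finset.Icc 2 N).image (fun n : ℕ => (n : ℝ) + 1 / n)) with hFdef
    have hFsub : F ⊆ hfin.toFinset := by
      intro x hx
      rw [Set.Finite.mem_toFinset]
      rw [hFdef, Finset.mem_union] at hx
      rcases hx with hx | hx
      · rw [Finset.mem_image] at hx
        obtain ⟨n, hn, rfl⟩ := hx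
        rw [Finset.mem_range, Nat.lt_succ_iff] at hn
        have hxS : (n : ℝ) ∈ mySet := Or.inr ⟨n, rfl⟩
        have hle : (n : ℝ) ≤ (N : ℝ) + 1/2 := by
          have : (n:ℝ) ≤ N := by exact_mod_cast hn
          linarith
        exact ⟨hxS, hxS, hle⟩
      · rw [Finset.mem_image] at hx
        obtain ⟨n, hn, rfl⟩ := hx
        rw [Finset.mem_Icc] at hn
        have hxS : (n : ℝ) + 1 / n ∈ mySet := Or.inl ⟨n, le_trans (by norm_num) hn.1, rfl⟩
        have h2 : (2:ℝ) ≤ n := by exact_mod_cast hn.1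
        have hle : (n : ℝ) + 1 / n ≤ (N : ℝ) + 1/2 := by
          have h1 : (n:ℝ) ≤ N := by exact_mod_cast hn.2
          have h3 : 1 / (n:ℝ) ≤ 1 / 2 := by
            apply one_div_le_one_div_of_le <;> linarith
          linarith
        exact ⟨hxS, hxS, hle⟩
    have hcard : 2 * N ≤ F.card := by
      rw [hFdef, Finset.card_union_of_disjoint]
      · rw [Finset.card_image_of_injective _ (fun x y h => by exact_mod_cast h),
          Finset.card_image_of_injOn, Finset.card_range, Nat.card_Icc]
        · omega
        · intro x hx y hy hxy
          simp only [Finset.mem_coe, Finset.mem_Icc] at hx hy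
          rcases lt_trichotomy x y with h | h | h
          · exact absurd hxy (ne_of_lt (hmono hx.1 h))
          · exact h
          · exact absurd hxy.symm (ne_of_lt (hmono hy.1 h))
      · rw [Finset.disjoint_left]
        rintro x hx hx2
        rw [Finset.mem_image] at hx hx2
        obtain ⟨m, _, rfl⟩ := hx
        obtain ⟨n, hn, heq⟩ := hx2
        rw [Finset.mem_Icc] at hn
        have h2 : (2:ℝ) ≤ n := by exact_mod_cast hn.1
        have h1n : 1 / (n:ℝ) < 1 := by rw [div_lt_one (by linarith)]; linarith
        have h1n' : (0:ℝ) < 1 / n := by positivity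
        have hlt1 : (n:ℝ) < m := by rw [← heq]; linarith
        have hlt2 : (m:ℝ) < n + 1 := by rw [← heq]; linarith
        have hn1 : n < m := by exact_mod_cast hlt1
        have hn2 : m < n + 1 := by exact_mod_cast hlt2
        omega
    calc ((2 * N : ℕ) : ℝ≥0∞) ≤ (F.card : ℝ≥0∞) := by exact_mod_cast hcard
      _ ≤ (hfin.toFinset.card : ℝ≥0∞) := by exact_mod_cast Finset.card_le_card hFsub
  have hden : volume (C + V) ≤ ENNReal.ofReal ((N : ℝ) + (b - a + 1)) := by
    have hsub : C + V ⊆ Set.Icc (a + 0) (b + ((N:ℝ) + 1/2)) := by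
      refine Set.Subset.trans (Set.add_subset_add hCab ?_) (Set.Icc_add_Icc_subset _ _ _ _)
      intro x hx
      exact ⟨mySet_nonneg hx.1, hx.2⟩
    calc volume (C + V) ≤ volume (Set.Icc (a + 0) (b + ((N:ℝ) + 1/2))) := measure_mono hsub
      _ = ENNReal.ofReal (b + ((N:ℝ) + 1/2) - (a + 0)) := Real.volume_Icc
      _ ≤ ENNReal.ofReal ((N : ℝ) + (b - a + 1)) := ENNReal.ofReal_le_ofReal (by linarith)
  have hNK : (0:ℝ) < (N:ℝ) + (b - a + 1) := by
    have : (1:ℝ) ≤ N := by exact_mod_cast hN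
    linarith
  rw [ENNReal.ofReal_div_of_pos hNK]
  apply ENNReal.div_le_div
  · refine le_trans (le_of_eq ?_) hnum
    rw [← ENNReal.ofReal_natCast]
    congr 1
    push_cast; ring
  · exact hden

lemma lower_bound (C : Set ℝ) (hC : IsCompact C) (hne : C.Nonempty) :
    (2 : ℝ≥0∞) ≤ ⨆ V ∈ {V : Set ℝ | MeasurableSet V ∧ IsCompact (closure V)},
      countOn mySet V / volume (C + V) := by
  obtain ⟨a, ha⟩ := hC.isBounded.bddBelow
  obtain ⟨b, hb⟩ := hC.isBounded.bddAbove
  have hCab : C ⊆ Set.Icc a b := fun x hx => ⟨ha hx, hb hx⟩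
  have hab : a ≤ b := by
    obtain ⟨c, hc⟩ := hne
    exact le_trans (ha hc) (hb hc)
  set K : ℝ := b - a + 1 with hK
  have hK1 : (1:ℝ) ≤ K := by simp [hK]; linarith
  apply ENNReal.le_of_forall_pos_le_add
  intro ε hε _
  have hε' : (0:ℝ) < ε := hε
  set N : ℕ := max 1 ⌈2*K/(ε:ℝ)⌉₊ with hNdef
  have hN1 : 1 ≤ N := le_max_left _ _
  have hNge : 2*K/(ε:ℝ) ≤ N := by
    refine (Nat.le_ceil _).trans ?_
    exact_mod_cast le_max_right 1 ⌈2*K/(ε:ℝ)⌉₊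
  have hNK : (0:ℝ) < (N:ℝ) + K := by
    have : (1:ℝ) ≤ N := by exact_mod_cast hN1
    linarith
  have h2K : 2*K ≤ (ε:ℝ)*N := by
    rw [div_le_iff₀ hε'] at hNge
    linarith
  have hreal : (2:ℝ) ≤ 2*(N:ℝ)/((N:ℝ)+K) + ε := by
    have hεK : (0:ℝ) ≤ (ε:ℝ)*K := mul_nonneg ε.coe_nonneg (by linarith)
    have h1 : (2:ℝ) ≤ (2*(N:ℝ) + (ε:ℝ)*((N:ℝ)+K))/((N:ℝ)+K) := by
      rw [le_div_iff₀ hNK]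
      nlinarith
    have h2 : (2*(N:ℝ) + (ε:ℝ)*((N:ℝ)+K))/((N:ℝ)+K) = 2*(N:ℝ)/((N:ℝ)+K) + ε := by
      field_simp
    linarith [h2 ▸ h1]
  have hVmem : (mySet ∩ Set.Iic ((N : ℝ) + 1/2)) ∈
      {V : Set ℝ | MeasurableSet V ∧ IsCompact (closure V)} := by
    have hVfin : (mySet ∩ Set.Iic ((N : ℝ) + 1/2)).Finite :=
      (mySet_finite_le ((N : ℝ) + 1/2)).subset (fun x hx => hx)
    refine ⟨(mySet_countable.mono inter_subset_left).measurableSet, ?_⟩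
    rw [hVfin.isClosed.closure_eq]
    exact hVfin.isCompact
  have hsup : ENNReal.ofReal ((2 * N : ℝ) / (N + K)) ≤
      ⨆ V ∈ {V : Set ℝ | MeasurableSet V ∧ IsCompact (closure V)},
        countOn mySet V / volume (C + V) :=
    le_trans (lower_ratio hCab hab N hN1)
      (le_iSup₂ (f := fun (V : Set ℝ)
        (_ : V ∈ {V : Set ℝ | MeasurableSet V ∧ IsCompact (closure V)}) =>
        countOn mySet V / volume (C + V)) _ hVmem)
  calc (2:ℝ≥0∞) = ENNReal.ofReal 2 := by norm_num
    _ ≤ ENNReal.ofReal (2*(N:ℝ)/((N:ℝ)+K) + ε) := ENNReal.ofReal_le_ofReal hreal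
    _ = ENNReal.ofReal (2*(N:ℝ)/((N:ℝ)+K)) + ENNReal.ofReal ε :=
        ENNReal.ofReal_add (by positivity) ε.coe_nonneg
    _ ≤ (⨆ V ∈ {V : Set ℝ | MeasurableSet V ∧ IsCompact (closure V)},
          countOn mySet V / volume (C + V)) + ε := by
        rw [ENNReal.ofReal_coe_nnreal]
        exact add_le_add hsup le_rfl

lemma mySet_uaud : uaud (countOn mySet) volume = 2 := by
  apply le_antisymm
  · refine iInf₂_le_of_le (Set.Icc (0:ℝ) 2) ⟨isCompact_Icc, ⟨0, by norm_num⟩⟩ ?_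
    exact iSup₂_le fun V hV => upper_bound V hV.1 hV.2
  · exact le_iInf₂ fun C hC => lower_bound C hC.1 hC.2

theorem density_two_diff_accumulates :
    uaud (countOn ({x : ℝ | ∃ n : ℕ, 1 ≤ n ∧ x = (n : ℝ) + 1 / (n : ℝ)} ∪
      {x : ℝ | ∃ n : ℕ, x = (n : ℝ)})) volume = 2 ∧
    ∀ U ∈ nhds (0 : ℝ),
      ∃ t ∈ ({x : ℝ | ∃ n : ℕ, 1 ≤ n ∧ x = (n : ℝ) + 1 / (n : ℝ)} ∪
          {x : ℝ | ∃ n : ℕ, x = (n : ℝ)}) -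
        ({x : ℝ | ∃ n : ℕ, 1 ≤ n ∧ x = (n : ℝ) + 1 / (n : ℝ)} ∪
          {x : ℝ | ∃ n : ℕ, x = (n : ℝ)}),
        t ≠ 0 ∧ t ∈ U := by
  constructor
  · exact mySet_uaud
  · intro U hU
    rw [Metric.mem_nhds_iff] at hU
    obtain ⟨ε, hε, hball⟩ := hU
    obtain ⟨n, hn⟩ := exists_nat_one_div_lt hε
    set m : ℕ := n + 1 with hm
    have hm1 : 1 ≤ m := Nat.le_add_left 1 n
    have hmpos : (0:ℝ) < m := by exact_mod_cast hm1
    refine ⟨1 / (m:ℝ), ?_, ?_, ?_⟩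
    · rw [Set.mem_sub]
      refine ⟨(m:ℝ) + 1/m, Or.inl ⟨m, hm1, rfl⟩, (m:ℝ), Or.inr ⟨m, rfl⟩, by ring⟩
    · positivity
    · apply hball
      rw [Metric.mem_ball, Real.dist_eq, sub_zero, abs_of_pos (by positivity)]
      exact_mod_cast hn
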